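/- Let Q be an axis-parallel cube in ℝ^d with center c_Q and side length ℓ_Q, and let β > -d. Then there exist positive constants c, C depending only on d and β such that c · max(ℓ_Q, |c_Q|)^β · |Q| ≤ ∫_Q |x|^β dx ≤ C · max(ℓ_Q, |c_Q|)^β · |Q|. -/

import Mathlib

set_option maxHeartbeats 1000000
open MeasureTheory Set Real


/-- The axis-parallel cube in `ℝ^d` with center `c` and side length `ℓ`. -/
noncomputable def cube (d : ℕ) (c : EuclideanSpace ℝ (Fin d)) (ℓ : ℝ) :
    Set (EuclideanSpace ℝ (Fin d)) := {x | ∀ i, |x i - c i| ≤ ℓ / 2}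

lemma cube_eq (d : ℕ) (c : EuclideanSpace ℝ (Fin d)) (ℓ : ℝ) :
    cube d c ℓ = (MeasurableEquiv.toLp 2 (Fin d → ℝ)).symm ⁻¹'
      (Set.pi Set.univ fun i ↦ Icc (c i - ℓ/2) (c i + ℓ/2)) := by
  ext x
  simp only [cube, mem_setOf_eq, mem_preimage, Set.mem_pi, mem_univ, forall_true_left, mem_Icc]
  refine forall_congr' fun i ↦ ?_
  have : (MeasurableEquiv.toLp 2 (Fin d → ℝ)).symm x i = x i := rfl
  rw [this, abs_le]
  constructor <;> intro h <;> constructor <;> linarith [h.1, h.2]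

lemma measurableSet_cube (d : ℕ) (c : EuclideanSpace ℝ (Fin d)) (ℓ : ℝ) :
    MeasurableSet (cube d c ℓ) := by
  rw [cube_eq]
  exact (MeasurableEquiv.measurable _) (MeasurableSet.univ_pi fun i ↦ measurableSet_Icc)

lemma volume_cube (d : ℕ) (c : EuclideanSpace ℝ (Fin d)) {ℓ : ℝ} (hℓ : 0 ≤ ℓ) :
    volume (cube d c ℓ) = ENNReal.ofReal ℓ ^ d := by
  rw [cube_eq]
  rw [(EuclideanSpace.volume_preserving_symm_measurableEquiv_toLp (Fin d)).measure_preimage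
    ((MeasurableSet.univ_pi fun i ↦ measurableSet_Icc).nullMeasurableSet)]
  rw [volume_pi_pi]
  simp only [Real.volume_Icc]
  have : ∀ i : Fin d, ENNReal.ofReal (c i + ℓ/2 - (c i - ℓ/2)) = ENNReal.ofReal ℓ := by
    intro i; ring_nf
  rw [Finset.prod_congr rfl fun i _ ↦ this i, Finset.prod_const, Finset.card_univ,
    Fintype.card_fin]

section part2
variable {d : ℕ}

lemma volume_cube_toReal (d : ℕ) (c : EuclideanSpace ℝ (Fin d)) {ℓ : ℝ} (hℓ : 0 ≤ ℓ)
    (h : volume (cube d c ℓ) = ENNReal.ofReal ℓ ^ d) :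
    (volume (cube d c ℓ)).toReal = ℓ ^ d := by
  rw [h, ENNReal.toReal_pow, ENNReal.toReal_ofReal hℓ]

lemma abs_coord_le_norm (x : EuclideanSpace ℝ (Fin d)) (i : Fin d) : |x i| ≤ ‖x‖ := by
  rw [EuclideanSpace.norm_eq, ← Real.sqrt_sq_eq_abs]
  apply Real.sqrt_le_sqrt
  calc (x i)^2 = ‖x i‖^2 := by rw [Real.norm_eq_abs, sq_abs]
  _ ≤ ∑ j, ‖x j‖^2 := Finset.single_le_sum (f := fun j ↦ ‖x j‖^2) (fun j _ ↦ sq_nonneg _) (Finset.mem_univ i)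

lemma norm_le_sqrt_of_forall {x : EuclideanSpace ℝ (Fin d)} {r : ℝ} (hr : 0 ≤ r)
    (h : ∀ i, |x i| ≤ r) : ‖x‖ ≤ Real.sqrt d * r := by
  rw [EuclideanSpace.norm_eq]
  have : ∑ j, ‖x j‖^2 ≤ (d : ℝ) * r^2 := by
    calc ∑ j, ‖x j‖^2 ≤ ∑ _j : Fin d, r^2 := by
          refine Finset.sum_le_sum fun j _ ↦ ?_
          rw [Real.norm_eq_abs]
          exact pow_le_pow_left₀ (abs_nonneg _) (h j) 2
    _ = (d : ℝ) * r^2 := by simp [Finset.sum_const, Finset.card_univ]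
  calc Real.sqrt (∑ j, ‖x j‖^2) ≤ Real.sqrt ((d:ℝ) * r^2) := Real.sqrt_le_sqrt this
  _ = Real.sqrt d * r := by rw [Real.sqrt_mul (Nat.cast_nonneg d), Real.sqrt_sq hr]

end part2

section oneD
variable {a b : ℝ}

lemma oneD_intervalIntegrable (ha : -1 < a) (hb : 0 ≤ b) :
    IntervalIntegrable (fun t : ℝ ↦ |t| ^ a) volume (-b) b := by
  have hIb : IntervalIntegrable (fun t : ℝ ↦ |t| ^ a) volume 0 b := by
    rw [intervalIntegrable_iff_integrableOn_Ioc_of_le hb]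
    refine (intervalIntegrable_iff_integrableOn_Ioc_of_le hb |>.1
      (intervalIntegral.intervalIntegrable_rpow' ha)).congr_fun (fun t ht ↦ ?_) measurableSet_Ioc
    rw [abs_of_pos ht.1]
  have hIneg : IntervalIntegrable (fun t : ℝ ↦ |t| ^ a) volume (-b) 0 := by
    have := ((IntervalIntegrable.iff_comp_neg (by simp)).1 hIb)
    simp only [abs_neg, neg_zero] at this
    exact this.symm
  exact hIneg.trans hIb

lemma oneD_integrableOn (ha : -1 < a) (hb : 0 ≤ b) :
    IntegrableOn (fun t : ℝ ↦ |t| ^ a) (Icc (-b) b) volume := by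
  rw [integrableOn_Icc_iff_integrableOn_Ioc]
  exact (intervalIntegrable_iff_integrableOn_Ioc_of_le (by linarith)).1
    (oneD_intervalIntegrable ha hb)

lemma oneD_integral (ha : -1 < a) (hb : 0 ≤ b) :
    ∫ t in Icc (-b) b, |t| ^ a = 2 * (b ^ (a + 1) / (a + 1)) := by
  have h0 : ∫ t in (0:ℝ)..b, |t| ^ a = b ^ (a+1) / (a+1) := by
    rw [intervalIntegral.integral_congr (g := fun t : ℝ ↦ t ^ a)
      (fun t ht ↦ by
        rw [Set.uIcc_of_le hb] at ht
        rw [abs_of_nonneg ht.1]),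
      integral_rpow (Or.inl ha)]
    rw [Real.zero_rpow (by linarith), sub_zero]
  have hneg : ∫ t in (-b:ℝ)..0, |t| ^ a = b ^ (a+1) / (a+1) := by
    have := intervalIntegral.integral_comp_neg (a := 0) (b := b) (fun t : ℝ ↦ |t| ^ a)
    simp only [abs_neg, neg_zero] at this
    rw [← this, h0]
  rw [MeasureTheory.integral_Icc_eq_integral_Ioc,
    ← intervalIntegral.integral_of_le (by linarith : -b ≤ b),
    ← intervalIntegral.integral_add_adjacent_intervals
      (oneD_intervalIntegrable ha hb |>.mono_set ?_)
      (oneD_intervalIntegrable ha hb |>.mono_set ?_),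
    h0, hneg]
  · ring
  · rw [Set.uIcc_of_le (by linarith : -b ≤ (0:ℝ)), Set.uIcc_of_le (by linarith : -b ≤ b)]
    exact Icc_subset_Icc le_rfl hb
  · rw [Set.uIcc_of_le hb, Set.uIcc_of_le (by linarith : -b ≤ b)]
    exact Icc_subset_Icc (by linarith) le_rfl

end oneD

section prodF

lemma ae_coords_ne (d : ℕ) : ∀ᵐ x : EuclideanSpace ℝ (Fin d), ∀ i, x i ≠ 0 := by
  rw [ae_iff]
  have hsub : {x : EuclideanSpace ℝ (Fin d) | ¬ ∀ i, x i ≠ 0} ⊆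
      ⋃ i, (MeasurableEquiv.toLp 2 (Fin d → ℝ)).symm ⁻¹' {y : Fin d → ℝ | y i = 0} := by
    intro x hx
    simp only [mem_setOf_eq, not_forall, not_not] at hx
    obtain ⟨i, hi⟩ := hx
    exact Set.mem_iUnion.2 ⟨i, hi⟩
  refine measure_mono_null hsub (measure_iUnion_null fun i ↦ ?_)
  have hms : MeasurableSet {y : Fin d → ℝ | y i = 0} := by
    have : {y : Fin d → ℝ | y i = 0} = (fun y : Fin d → ℝ ↦ y i) ⁻¹' {0} := rfl
    rw [this]
    exact (measurable_pi_apply i) (measurableSet_singleton (0:ℝ))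
  rw [(EuclideanSpace.volume_preserving_symm_measurableEquiv_toLp (Fin d)).measure_preimage
    hms.nullMeasurableSet]
  rw [MeasureTheory.volume_pi]
  exact MeasureTheory.Measure.pi_hyperplane _ i 0

lemma F_integrable {d : ℕ} {a b : ℝ} (ha : -1 < a) (hb : 0 ≤ b) :
    Integrable (fun x : EuclideanSpace ℝ (Fin d) ↦
      ∏ i, (Icc (-b) b).indicator (fun t ↦ |t| ^ a) (x i)) := by
  have hg : Integrable ((Icc (-b) b).indicator (fun t : ℝ ↦ |t| ^ a)) volume :=
    (integrable_indicator_iff measurableSet_Icc).2 (oneD_integrableOn ha hb)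
  have hP : Integrable
      (fun y : Fin d → ℝ ↦ ∏ i, (Icc (-b) b).indicator (fun t ↦ |t| ^ a) (y i)) :=
    Integrable.fintype_prod (fun _ ↦ hg)
  exact ((EuclideanSpace.volume_preserving_symm_measurableEquiv_toLp (Fin d)).integrable_comp_emb
    (MeasurableEquiv.toLp 2 (Fin d → ℝ)).symm.measurableEmbedding).2 hP

lemma F_integral {d : ℕ} {a b : ℝ} (ha : -1 < a) (hb : 0 ≤ b) :
    ∫ x : EuclideanSpace ℝ (Fin d),
      ∏ i, (Icc (-b) b).indicator (fun t ↦ |t| ^ a) (x i)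
      = (2 * (b ^ (a + 1) / (a + 1))) ^ d := by
  have h1 := (EuclideanSpace.volume_preserving_symm_measurableEquiv_toLp (Fin d)).integral_comp'
    (fun y : Fin d → ℝ ↦ ∏ i, (Icc (-b) b).indicator (fun t ↦ |t| ^ a) (y i))
  rw [show (fun x : EuclideanSpace ℝ (Fin d) ↦
      ∏ i, (Icc (-b) b).indicator (fun t ↦ |t| ^ a) (x i))
    = (fun y : Fin d → ℝ ↦ ∏ i, (Icc (-b) b).indicator (fun t ↦ |t| ^ a) (y i)) ∘
      (MeasurableEquiv.toLp 2 (Fin d → ℝ)).symm from rfl]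
  rw [Function.comp_def, h1, MeasureTheory.volume_pi,
    MeasureTheory.integral_fintype_prod_eq_prod
      (f := fun (_ : Fin d) ↦ (Icc (-b) b).indicator (fun t : ℝ ↦ |t| ^ a)),
    Finset.prod_const, Finset.card_univ, Fintype.card_fin]
  congr 1
  rw [MeasureTheory.integral_indicator measurableSet_Icc]
  exact oneD_integral ha hb

end prodF

section pointwise

lemma key_pointwise {d : ℕ} (hd : 0 < d) {β b : ℝ} (hβ0 : β < 0)
    (x : EuclideanSpace ℝ (Fin d)) (hx : ∀ i, x i ≠ 0) (hxb : ∀ i, |x i| ≤ b) :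
    ‖x‖ ^ β ≤ ∏ i, (Icc (-b) b).indicator (fun t ↦ |t| ^ (β / d)) (x i) := by
  set a : ℝ := β / d with ha_def
  have hmem : ∀ i, x i ∈ Icc (-b) b := fun i ↦ abs_le.1 (hxb i)
  rw [Finset.prod_congr rfl fun i _ ↦ Set.indicator_of_mem (hmem i) _]
  have hxne : x ≠ 0 := by
    intro h
    exact hx ⟨0, hd⟩ (by rw [h]; rfl)
  have hxpos : (0:ℝ) < ‖x‖ := norm_pos_iff.2 hxne
  have hppos : (0:ℝ) < ∏ i, |x i| := Finset.prod_pos fun i _ ↦ abs_pos.2 (hx i)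
  have h1 : ∏ i, |x i| ≤ ‖x‖ ^ (d : ℕ) := by
    calc ∏ i, |x i| ≤ ∏ _i : Fin d, ‖x‖ :=
          Finset.prod_le_prod (fun i _ ↦ abs_nonneg _) (fun i _ ↦ abs_coord_le_norm x i)
    _ = ‖x‖ ^ (d : ℕ) := by rw [Finset.prod_const, Finset.card_univ, Fintype.card_fin]
  have ha0 : a ≤ 0 := div_nonpos_of_nonpos_of_nonneg hβ0.le (Nat.cast_nonneg d)
  calc ‖x‖ ^ β = (‖x‖ ^ (d : ℕ)) ^ a := by
        rw [← Real.rpow_natCast ‖x‖ d, ← Real.rpow_mul (norm_nonneg x)]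
        congr 1
        rw [ha_def]; field_simp [Nat.cast_ne_zero.2 hd.ne']
  _ ≤ (∏ i, |x i|) ^ a := Real.rpow_le_rpow_of_nonpos hppos h1 ha0
  _ = ∏ i, |x i| ^ a := (Real.finset_prod_rpow _ _ (fun i _ ↦ abs_nonneg _) a).symm

lemma rpow_between {β u t : ℝ} (hu : 0 < u) (ht : 0 < t) (h1 : u / 2 ≤ t) (h2 : t ≤ 2 * u) :
    min ((2:ℝ)^β) ((1/2:ℝ)^β) * u ^ β ≤ t ^ β ∧
      t ^ β ≤ max ((2:ℝ)^β) ((1/2:ℝ)^β) * u ^ β := by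
  have e1 : (u / 2) ^ β = (1/2:ℝ)^β * u ^ β := by
    rw [show u / 2 = (1/2 : ℝ) * u by ring, Real.mul_rpow (by norm_num) hu.le]
  have e2 : (2 * u) ^ β = (2:ℝ)^β * u ^ β := Real.mul_rpow (by norm_num) hu.le
  have hupos : (0:ℝ) ≤ u ^ β := (Real.rpow_pos_of_pos hu β).le
  rcases le_or_gt 0 β with hβ | hβ
  · constructor
    · calc min ((2:ℝ)^β) ((1/2:ℝ)^β) * u ^ β ≤ (1/2:ℝ)^β * u ^ β :=
            mul_le_mul_of_nonneg_right (min_le_right _ _) hupos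
      _ = (u / 2) ^ β := e1.symm
      _ ≤ t ^ β := Real.rpow_le_rpow (by positivity) h1 hβ
    · calc t ^ β ≤ (2 * u) ^ β := Real.rpow_le_rpow ht.le h2 hβ
      _ = (2:ℝ)^β * u ^ β := e2
      _ ≤ max ((2:ℝ)^β) ((1/2:ℝ)^β) * u ^ β :=
            mul_le_mul_of_nonneg_right (le_max_left _ _) hupos
  · constructor
    · calc min ((2:ℝ)^β) ((1/2:ℝ)^β) * u ^ β ≤ (2:ℝ)^β * u ^ β :=
            mul_le_mul_of_nonneg_right (min_le_left _ _) hupos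
      _ = (2 * u) ^ β := e2.symm
      _ ≤ t ^ β := Real.rpow_le_rpow_of_nonpos ht h2 hβ.le
    · calc t ^ β ≤ (u / 2) ^ β := Real.rpow_le_rpow_of_nonpos (by positivity) h1 hβ.le
      _ = (1/2:ℝ)^β * u ^ β := e1
      _ ≤ max ((2:ℝ)^β) ((1/2:ℝ)^β) * u ^ β :=
            mul_le_mul_of_nonneg_right (le_max_right _ _) hupos

end pointwise

section midlevel
variable {d : ℕ} {c : EuclideanSpace ℝ (Fin d)} {ℓ β : ℝ}

lemma volume_cube_ne_top (hℓ : 0 ≤ ℓ) : volume (cube d c ℓ) ≠ ⊤ := by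
  rw [volume_cube d c hℓ]
  exact ENNReal.pow_ne_top ENNReal.ofReal_ne_top

lemma aesm_rpow {μ : Measure (EuclideanSpace ℝ (Fin d))} :
    AEStronglyMeasurable (fun x : EuclideanSpace ℝ (Fin d) ↦ ‖x‖ ^ β) μ := by
  exact (measurable_norm.pow_const β).aestronglyMeasurable

lemma integrableOn_cube_of_bounded {M : ℝ} (hℓ : 0 ≤ ℓ)
    (h : ∀ x ∈ cube d c ℓ, ‖x‖ ^ β ≤ M) :
    IntegrableOn (fun x : EuclideanSpace ℝ (Fin d) ↦ ‖x‖ ^ β) (cube d c ℓ) volume := by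
  refine Measure.integrableOn_of_bounded (M := M) (volume_cube_ne_top hℓ) aesm_rpow ?_
  filter_upwards [ae_restrict_mem (measurableSet_cube d c ℓ)] with x hx
  rw [Real.norm_eq_abs, abs_of_nonneg (Real.rpow_nonneg (norm_nonneg x) β)]
  exact h x hx

lemma const_mul_le_integral_cube {K : ℝ} (hℓ : 0 ≤ ℓ)
    (hInt : IntegrableOn (fun x : EuclideanSpace ℝ (Fin d) ↦ ‖x‖ ^ β) (cube d c ℓ) volume)
    (h : ∀ᵐ x ∂(volume.restrict (cube d c ℓ)), K ≤ ‖x‖ ^ β) :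
    K * ℓ ^ d ≤ ∫ x in cube d c ℓ, ‖x‖ ^ β := by
  have h1 : ∫ _x in cube d c ℓ, K ∂volume = K * ℓ ^ d := by
    rw [setIntegral_const, measureReal_def, volume_cube_toReal d c hℓ (volume_cube d c hℓ), smul_eq_mul]
    ring
  rw [← h1]
  exact integral_mono_ae
    ((integrableOn_const_iff).2 (Or.inr (lt_of_le_of_ne le_top (volume_cube_ne_top hℓ)))) hInt h

lemma integral_cube_le_const_mul {K : ℝ} (hℓ : 0 ≤ ℓ)
    (hInt : IntegrableOn (fun x : EuclideanSpace ℝ (Fin d) ↦ ‖x‖ ^ β) (cube d c ℓ) volume)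
    (h : ∀ᵐ x ∂(volume.restrict (cube d c ℓ)), ‖x‖ ^ β ≤ K) :
    (∫ x in cube d c ℓ, ‖x‖ ^ β) ≤ K * ℓ ^ d := by
  have h1 : ∫ _x in cube d c ℓ, K ∂volume = K * ℓ ^ d := by
    rw [setIntegral_const, measureReal_def, volume_cube_toReal d c hℓ (volume_cube d c hℓ), smul_eq_mul]
    ring
  rw [← h1]
  exact integral_mono_ae hInt
    ((integrableOn_const_iff).2 (Or.inr (lt_of_le_of_ne le_top (volume_cube_ne_top hℓ)))) h

lemma norm_sub_center_le {x : EuclideanSpace ℝ (Fin d)} (hx : x ∈ cube d c ℓ) (hℓ : 0 ≤ ℓ) :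
    ‖x - c‖ ≤ Real.sqrt d * (ℓ / 2) := by
  refine norm_le_sqrt_of_forall (by linarith) fun i ↦ ?_
  show |x i - c i| ≤ ℓ / 2
  exact hx i

end midlevel

/-- For `β > -d`, `∫_Q |x|^β dx ≈ max(ℓ_Q, |c_Q|)^β |Q|` with constants depending
only on `d` and `β`. -/
theorem stmt0 (d : ℕ) (hd : 0 < d) (β : ℝ) (hβ : -(d : ℝ) < β) :
    ∃ c C : ℝ, 0 < c ∧ 0 < C ∧
      ∀ (cQ : EuclideanSpace ℝ (Fin d)) (ℓ : ℝ), 0 < ℓ →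
        c * max ℓ ‖cQ‖ ^ β * ℓ ^ (d : ℕ) ≤ (∫ x in cube d cQ ℓ, ‖x‖ ^ β) ∧
        (∫ x in cube d cQ ℓ, ‖x‖ ^ β) ≤ C * max ℓ ‖cQ‖ ^ β * ℓ ^ (d : ℕ) := by
  have hd0 : (0:ℝ) < d := Nat.cast_pos.2 hd
  set s : ℝ := Real.sqrt d with hs_def
  have hs0 : 0 < s := Real.sqrt_pos.2 hd0
  have hs1 : 1 ≤ s := by
    have h := Real.sqrt_le_sqrt (show (1:ℝ) ≤ d by exact_mod_cast hd)
    rwa [Real.sqrt_one] at h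
  have ha1 : (-1:ℝ) < β / d := by rw [lt_div_iff₀ hd0]; linarith
  have ha1' : (0:ℝ) < β / d + 1 := by linarith
  set cA1 : ℝ := (1/(4*s)) ^ β * (1/2) with hcA1_def
  set CA1 : ℝ := (2*s) ^ β with hCA1_def
  set cA2 : ℝ := (2*s) ^ β with hcA2_def
  set K0 : ℝ := (2 * (((1+2*s)/2) ^ (β/d+1) / (β/d+1))) ^ d with hK0_def
  set CA2 : ℝ := K0 * s ^ (-β) with hCA2_def
  set cB : ℝ := min ((2:ℝ)^β) ((1/2:ℝ)^β) with hcB_def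
  set CB : ℝ := max ((2:ℝ)^β) ((1/2:ℝ)^β) with hCB_def
  have hcA1pos : 0 < cA1 := mul_pos (Real.rpow_pos_of_pos (by positivity) β) one_half_pos
  have hCA1pos : 0 < CA1 := Real.rpow_pos_of_pos (by positivity) β
  have hcA2pos : 0 < cA2 := hCA1pos
  have hK0pos : 0 < K0 := by
    apply pow_pos
    have := Real.rpow_pos_of_pos (show (0:ℝ) < (1+2*s)/2 by positivity) (β/d+1)
    positivity
  have hCA2pos : 0 < CA2 := mul_pos hK0pos (Real.rpow_pos_of_pos hs0 _)
  have hcBpos : 0 < cB := lt_min (Real.rpow_pos_of_pos two_pos β)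
    (Real.rpow_pos_of_pos one_half_pos β)
  have hCBpos : 0 < CB := lt_of_lt_of_le (Real.rpow_pos_of_pos two_pos β) (le_max_left _ _)
  refine ⟨min (min cA1 cA2) cB, max (max CA1 CA2) CB,
    lt_min (lt_min hcA1pos hcA2pos) hcBpos,
    lt_of_lt_of_le hCA1pos ((le_max_left _ _).trans (le_max_left _ _)), ?_⟩
  intro cQ ℓ hℓ
  have hℓ0 : (0:ℝ) ≤ ℓ := hℓ.le
  set m := max ℓ ‖cQ‖ with hm_def
  have hm : 0 < m := hℓ.trans_le (le_max_left _ _)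
  have hmβ : 0 < m ^ β := Real.rpow_pos_of_pos hm β
  have hℓd : (0:ℝ) < ℓ ^ (d:ℕ) := pow_pos hℓ d
  have hub : ∀ x ∈ cube d cQ ℓ, ‖x‖ ≤ ‖cQ‖ + s * ℓ / 2 := by
    intro x hx
    have h1 : ‖x - cQ‖ ≤ s * (ℓ/2) := norm_sub_center_le hx hℓ0
    have h2 : ‖x‖ - ‖cQ‖ ≤ ‖x - cQ‖ := norm_sub_norm_le x cQ
    have h3 : s * (ℓ/2) = s * ℓ / 2 := by ring
    linarith
  have hlb : ∀ x ∈ cube d cQ ℓ, ‖cQ‖ - s * ℓ / 2 ≤ ‖x‖ := by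
    intro x hx
    have h1 : ‖x - cQ‖ ≤ s * (ℓ/2) := norm_sub_center_le hx hℓ0
    have h2 : ‖cQ‖ - ‖x‖ ≤ ‖cQ - x‖ := norm_sub_norm_le cQ x
    rw [norm_sub_rev] at h2
    have h3 : s * (ℓ/2) = s * ℓ / 2 := by ring
    linarith
  by_cases hcase : ‖cQ‖ ≤ s * ℓ
  · -- CASE A : center close to origin
    have hmle : m ≤ s * ℓ := max_le (by nlinarith) hcase
    have hub2 : ∀ x ∈ cube d cQ ℓ, ‖x‖ ≤ 2*s*ℓ := by
      intro x hx
      have := hub x hx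
      nlinarith
    by_cases hsign : 0 ≤ β
    · -- A, β ≥ 0
      have hbound : ∀ x ∈ cube d cQ ℓ, ‖x‖^β ≤ CA1 * m^β := by
        intro x hx
        calc ‖x‖^β ≤ (2*s*ℓ)^β := Real.rpow_le_rpow (norm_nonneg x) (hub2 x hx) hsign
        _ = (2*s)^β * ℓ^β := Real.mul_rpow (by positivity) hℓ0
        _ ≤ (2*s)^β * m^β := mul_le_mul_of_nonneg_left
              (Real.rpow_le_rpow hℓ0 (le_max_left _ _) hsign)
              (Real.rpow_nonneg (by positivity) β)
      have hInt := integrableOn_cube_of_bounded hℓ0 hbound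
      constructor
      · -- lower bound, β ≥ 0
        set B := Metric.closedBall (0 : EuclideanSpace ℝ (Fin d)) (ℓ/4) with hB_def
        have hBsub : B ⊆ cube d 0 (ℓ/2) := by
          intro x hx i
          have h1 : ‖x‖ ≤ ℓ/4 := mem_closedBall_zero_iff.1 hx
          have h2 : |x i| ≤ ‖x‖ := abs_coord_le_norm x i
          have h3 : (0 : EuclideanSpace ℝ (Fin d)) i = 0 := rfl
          rw [h3, sub_zero]
          linarith
        have hBvol : volume B ≤ ENNReal.ofReal (ℓ/2) ^ d :=
          le_trans (measure_mono hBsub) (volume_cube d 0 (by positivity)).le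
        have hNfin : volume (cube d cQ ℓ \ B) ≠ ⊤ :=
          ne_top_of_le_ne_top (volume_cube_ne_top hℓ0) (measure_mono diff_subset)
        have key : ENNReal.ofReal ℓ ^ d ≤ volume (cube d cQ ℓ \ B) + ENNReal.ofReal (ℓ/2) ^ d := by
          calc ENNReal.ofReal ℓ ^ d = volume (cube d cQ ℓ) := (volume_cube d cQ hℓ0).symm
          _ ≤ volume ((cube d cQ ℓ \ B) ∪ B) := measure_mono (by
                intro x hx
                by_cases hxB : x ∈ B
                · exact Or.inr hxB
                · exact Or.inl ⟨hx, hxB⟩)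
          _ ≤ volume (cube d cQ ℓ \ B) + volume B := measure_union_le _ _
          _ ≤ _ := by gcongr
        have hNvol : ℓ^d - (ℓ/2)^d ≤ (volume (cube d cQ ℓ \ B)).toReal := by
          have hfin2 : ENNReal.ofReal (ℓ/2) ^ d ≠ ⊤ := ENNReal.pow_ne_top ENNReal.ofReal_ne_top
          have h1 := ENNReal.toReal_mono (ENNReal.add_ne_top.2 ⟨hNfin, hfin2⟩) key
          rw [ENNReal.toReal_add hNfin hfin2, ENNReal.toReal_pow, ENNReal.toReal_pow,
            ENNReal.toReal_ofReal hℓ0, ENNReal.toReal_ofReal (by positivity : (0:ℝ) ≤ ℓ/2)] at h1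
          linarith
        have hIntN : IntegrableOn (fun x : EuclideanSpace ℝ (Fin d) ↦ ‖x‖^β)
            (cube d cQ ℓ \ B) volume := hInt.mono_set diff_subset
        have hNmeas : MeasurableSet (cube d cQ ℓ \ B) :=
          (measurableSet_cube d cQ ℓ).diff Metric.isClosed_closedBall.measurableSet
        have hconst : ∀ x ∈ cube d cQ ℓ \ B, (ℓ/4)^β ≤ ‖x‖^β := by
          intro x hx
          have h1 : ¬ (‖x‖ ≤ ℓ/4) := by
            intro hle
            exact hx.2 (mem_closedBall_zero_iff.2 hle)
          exact Real.rpow_le_rpow (by positivity) (not_le.1 h1).le hsign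
        have step1 : (ℓ/4)^β * (volume (cube d cQ ℓ \ B)).toReal
            ≤ ∫ x in cube d cQ ℓ \ B, ‖x‖^β := by
          have h1 : ∫ _x in cube d cQ ℓ \ B, ((ℓ/4)^β : ℝ)
              = (volume (cube d cQ ℓ \ B)).toReal * (ℓ/4)^β := by
            rw [setIntegral_const, measureReal_def, smul_eq_mul]
          rw [mul_comm, ← h1]
          exact setIntegral_mono_on
            ((integrableOn_const_iff).2 (Or.inr (lt_of_le_of_ne le_top hNfin)))
            hIntN hNmeas hconst
        have step2 : (∫ x in cube d cQ ℓ \ B, ‖x‖^β) ≤ ∫ x in cube d cQ ℓ, ‖x‖^β :=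
          setIntegral_mono_set hInt
            (ae_of_all _ fun x ↦ Real.rpow_nonneg (norm_nonneg x) β)
            (HasSubset.Subset.eventuallyLE diff_subset)
        have hmid : min (min cA1 cA2) cB * m^β * ℓ^(d:ℕ) ≤ (ℓ/4)^β * (ℓ^d - (ℓ/2)^d) := by
          have hA : (1/(4*s))^β * m^β ≤ (ℓ/4)^β := by
            rw [← Real.mul_rpow (by positivity) hm.le]
            refine Real.rpow_le_rpow (by positivity) ?_ hsign
            rw [div_mul_eq_mul_div, div_le_div_iff₀ (by positivity) (by norm_num)]
            nlinarith
          have hBb : (ℓ/2)^d ≤ ℓ^d/2 := by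
            rw [div_pow]
            apply div_le_div_of_nonneg_left (by positivity) (by norm_num)
            calc (2:ℝ) = 2^1 := (pow_one 2).symm
            _ ≤ 2^d := pow_le_pow_right₀ one_le_two hd
          have hle1 : min (min cA1 cA2) cB ≤ cA1 := (min_le_left _ _).trans (min_le_left _ _)
          have h2 : min (min cA1 cA2) cB * m^β * ℓ^(d:ℕ) ≤ cA1 * m^β * ℓ^(d:ℕ) := by
            apply mul_le_mul_of_nonneg_right _ hℓd.le
            exact mul_le_mul_of_nonneg_right hle1 hmβ.le
          have h3 : cA1 * m^β * ℓ^(d:ℕ) = ((1/(4*s))^β * m^β) * (ℓ^(d:ℕ)/2) := by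
            rw [hcA1_def]; ring
          have h4 : ((1/(4*s))^β * m^β) * (ℓ^(d:ℕ)/2) ≤ (ℓ/4)^β * (ℓ^d - (ℓ/2)^d) := by
            apply mul_le_mul hA (by linarith) (by positivity)
              (Real.rpow_nonneg (by positivity) β)
          linarith
        calc min (min cA1 cA2) cB * m^β * ℓ^(d:ℕ) ≤ (ℓ/4)^β * (ℓ^d - (ℓ/2)^d) := hmid
        _ ≤ (ℓ/4)^β * (volume (cube d cQ ℓ \ B)).toReal :=
              mul_le_mul_of_nonneg_left hNvol (Real.rpow_nonneg (by positivity) β)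
        _ ≤ ∫ x in cube d cQ ℓ \ B, ‖x‖^β := step1
        _ ≤ ∫ x in cube d cQ ℓ, ‖x‖^β := step2
      · -- upper bound, β ≥ 0
        have h1 := integral_cube_le_const_mul hℓ0 hInt
          ((ae_restrict_mem (measurableSet_cube d cQ ℓ)).mono fun x hx ↦ hbound x hx)
        refine h1.trans ?_
        have : CA1 * m^β ≤ max (max CA1 CA2) CB * m^β :=
          mul_le_mul_of_nonneg_right ((le_max_left _ _).trans (le_max_left _ _)) hmβ.le
        exact mul_le_mul_of_nonneg_right this hℓd.le
    · -- A, β < 0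
      have hβneg : β < 0 := not_le.1 hsign
      set b0 : ℝ := (1+2*s)*ℓ/2 with hb0_def
      have hb0pos : 0 < b0 := by rw [hb0_def]; positivity
      have hQb : ∀ x ∈ cube d cQ ℓ, ∀ i, |x i| ≤ b0 := by
        intro x hx i
        have h1 : |x i - cQ i| ≤ ℓ/2 := hx i
        have h2 : |cQ i| ≤ ‖cQ‖ := abs_coord_le_norm cQ i
        calc |x i| = |(x i - cQ i) + cQ i| := by rw [sub_add_cancel]
        _ ≤ |x i - cQ i| + |cQ i| := abs_add_le _ _
        _ ≤ ℓ/2 + s*ℓ := by linarith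
        _ = b0 := by rw [hb0_def]; ring
      have hF := F_integrable (d := d) (a := β/d) (b := b0) ha1 hb0pos.le
      have hFval := F_integral (d := d) (a := β/d) (b := b0) ha1 hb0pos.le
      have hFnonneg : ∀ x : EuclideanSpace ℝ (Fin d),
          0 ≤ ∏ i, (Set.Icc (-b0) b0).indicator (fun t ↦ |t| ^ (β/d)) (x i) := fun x ↦
        Finset.prod_nonneg fun i _ ↦
          Set.indicator_nonneg (fun t _ ↦ Real.rpow_nonneg (abs_nonneg t) _) _
      have haeQ : ∀ᵐ x ∂(volume.restrict (cube d cQ ℓ)),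
          ‖x‖^β ≤ ∏ i, (Set.Icc (-b0) b0).indicator (fun t ↦ |t| ^ (β/d)) (x i) := by
        filter_upwards [ae_restrict_mem (measurableSet_cube d cQ ℓ),
          ae_restrict_of_ae (ae_coords_ne d)] with x hxQ hxne
        exact key_pointwise hd hβneg x hxne (hQb x hxQ)
      have hInt : IntegrableOn (fun x : EuclideanSpace ℝ (Fin d) ↦ ‖x‖^β)
          (cube d cQ ℓ) volume := by
        refine Integrable.mono' (hF.restrict (s := cube d cQ ℓ)) aesm_rpow ?_
        filter_upwards [haeQ] with x hx
        rw [Real.norm_eq_abs, abs_of_nonneg (Real.rpow_nonneg (norm_nonneg x) β)]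
        exact hx
      constructor
      · -- lower bound, β < 0
        have hconst : ∀ᵐ x ∂(volume.restrict (cube d cQ ℓ)), (2*s*ℓ)^β ≤ ‖x‖^β := by
          filter_upwards [ae_restrict_mem (measurableSet_cube d cQ ℓ),
            ae_restrict_of_ae (ae_coords_ne d)] with x hxQ hxne
          have hxpos : 0 < ‖x‖ := norm_pos_iff.2 fun h ↦ hxne ⟨0, hd⟩ (by rw [h]; rfl)
          exact Real.rpow_le_rpow_of_nonpos hxpos (hub2 x hxQ) hβneg.le
        have h1 := const_mul_le_integral_cube hℓ0 hInt hconst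
        refine le_trans ?_ h1
        have h2 : (2*s*ℓ)^β = (2*s)^β * ℓ^β := Real.mul_rpow (by positivity) hℓ0
        have h3 : m^β ≤ ℓ^β := Real.rpow_le_rpow_of_nonpos hℓ (le_max_left _ _) hβneg.le
        have h4 : cA2 * m^β ≤ (2*s*ℓ)^β := by
          rw [h2, hcA2_def]
          exact mul_le_mul_of_nonneg_left h3 (Real.rpow_nonneg (by positivity) β)
        calc min (min cA1 cA2) cB * m^β * ℓ^(d:ℕ) ≤ cA2 * m^β * ℓ^(d:ℕ) := by
              apply mul_le_mul_of_nonneg_right _ hℓd.le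
              exact mul_le_mul_of_nonneg_right
                ((min_le_left _ _).trans (min_le_right _ _)) hmβ.le
        _ ≤ (2*s*ℓ)^β * ℓ^(d:ℕ) := mul_le_mul_of_nonneg_right h4 hℓd.le
      · -- upper bound, β < 0
        have step1 : (∫ x in cube d cQ ℓ, ‖x‖^β)
            ≤ ∫ x in cube d cQ ℓ,
                ∏ i, (Set.Icc (-b0) b0).indicator (fun t ↦ |t| ^ (β/d)) (x i) :=
          integral_mono_ae hInt (hF.restrict (s := cube d cQ ℓ)) haeQ
        have step2 : (∫ x in cube d cQ ℓ,
              ∏ i, (Set.Icc (-b0) b0).indicator (fun t ↦ |t| ^ (β/d)) (x i))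
            ≤ ∫ x : EuclideanSpace ℝ (Fin d),
                ∏ i, (Set.Icc (-b0) b0).indicator (fun t ↦ |t| ^ (β/d)) (x i) :=
          setIntegral_le_integral hF (ae_of_all _ hFnonneg)
        have hc2 : (0:ℝ) < (1+2*s)/2 := by positivity
        have e1 : b0 ^ (β/d+1) = ((1+2*s)/2)^(β/d+1) * ℓ^(β/d+1) := by
          rw [show b0 = ((1+2*s)/2) * ℓ by rw [hb0_def]; ring, Real.mul_rpow hc2.le hℓ0]
        have e2 : (2 * (b0 ^ (β/d + 1) / (β/d + 1))) ^ d = K0 * (ℓ^(β/d+1))^(d:ℕ) := by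
          rw [e1, hK0_def, ← mul_pow]
          congr 1
          ring
        have e3 : (ℓ^(β/d+1))^(d:ℕ) = ℓ^β * ℓ^(d:ℕ) := by
          rw [← Real.rpow_natCast (ℓ^(β/d+1)) d, ← Real.rpow_mul hℓ0]
          have h5 : (β/d+1) * (d:ℝ) = β + d := by field_simp
          rw [h5, Real.rpow_add hℓ, Real.rpow_natCast]
        have e4 : ℓ^β ≤ s^(-β) * m^β := by
          have h1 : (s*ℓ)^β ≤ m^β := Real.rpow_le_rpow_of_nonpos hm hmle hβneg.le
          rw [Real.mul_rpow hs0.le hℓ0] at h1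
          have h2 : s^(-β) * (s^β * ℓ^β) ≤ s^(-β) * m^β :=
            mul_le_mul_of_nonneg_left h1 (Real.rpow_nonneg hs0.le _)
          rw [← mul_assoc, ← Real.rpow_add hs0, neg_add_cancel, Real.rpow_zero, one_mul] at h2
          exact h2
        have hfinal : (∫ x in cube d cQ ℓ, ‖x‖^β) ≤ K0 * (ℓ^β * ℓ^(d:ℕ)) := by
          rw [← e3, ← e2, ← hFval]
          exact step1.trans step2
        refine hfinal.trans ?_
        have h6 : K0 * (ℓ^β * ℓ^(d:ℕ)) ≤ K0 * (s^(-β) * m^β * ℓ^(d:ℕ)) := by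
          apply mul_le_mul_of_nonneg_left _ hK0pos.le
          exact mul_le_mul_of_nonneg_right e4 hℓd.le
        refine h6.trans ?_
        have h7 : K0 * (s^(-β) * m^β * ℓ^(d:ℕ)) = CA2 * m^β * ℓ^(d:ℕ) := by
          rw [hCA2_def]; ring
        rw [h7]
        exact mul_le_mul_of_nonneg_right
          (mul_le_mul_of_nonneg_right ((le_max_right _ _).trans (le_max_left _ _)) hmβ.le)
          hℓd.le
  · -- CASE B : center far from origin
    push_neg at hcase
    have hmeq : m = ‖cQ‖ := max_eq_right (by nlinarith)
    have hbounds : ∀ x ∈ cube d cQ ℓ, m/2 ≤ ‖x‖ ∧ ‖x‖ ≤ 2*m := by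
      intro x hx
      have h1 := hub x hx
      have h2 := hlb x hx
      rw [hmeq]
      constructor <;> nlinarith
    have hpt : ∀ x ∈ cube d cQ ℓ, cB * m^β ≤ ‖x‖^β ∧ ‖x‖^β ≤ CB * m^β := by
      intro x hx
      obtain ⟨h1, h2⟩ := hbounds x hx
      have hxpos : (0:ℝ) < ‖x‖ := lt_of_lt_of_le (by positivity) h1
      exact rpow_between hm hxpos h1 h2
    have hInt := integrableOn_cube_of_bounded hℓ0 (fun x hx ↦ (hpt x hx).2)
    constructor
    · refine le_trans ?_ (const_mul_le_integral_cube hℓ0 hInt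
        ((ae_restrict_mem (measurableSet_cube d cQ ℓ)).mono fun x hx ↦ (hpt x hx).1))
      exact mul_le_mul_of_nonneg_right
        (mul_le_mul_of_nonneg_right (min_le_right _ _) hmβ.le) hℓd.le
    · refine le_trans (integral_cube_le_const_mul hℓ0 hInt
        ((ae_restrict_mem (measurableSet_cube d cQ ℓ)).mono fun x hx ↦ (hpt x hx).2)) ?_
      exact mul_le_mul_of_nonneg_right
        (mul_le_mul_of_nonneg_right (le_max_right _ _) hmβ.le) hℓd.le
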